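/- Let L be a language consisting of finitely many binary relation symbols, and let M be a countably infinite ultrahomogeneous L-structure with the point-Ramsey property. Then M has the externally definable Ramsey property. (Proposition 6.1.) -/

import Mathlib

open FirstOrder FirstOrder.Language FirstOrder.Language.Structure CategoryTheory

universe u v w

set_option linter.unusedSectionVars false

namespace EDRP

/-- The colouring `χ` of the copies of `A` in `M` (copies identified with embeddings
`A ↪[L] M`) is externally definable by the formulas `φ i`: there are an elementary extension
`N ⪰ M` and a parameter tuple `ē` in `N` such that `χ(f(ā)) = i` iff `N ⊨ φ i (ē, f(ā))`. -/
def ExtDefinableBy (L : FirstOrder.Language.{u, v}) (M : Type w) [L.Structure M]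
    (A : Type w) [L.Structure A]
    {k e : ℕ} (φ : Fin k → L.Formula (Fin e ⊕ A)) (χ : (A ↪[L] M) → Fin k) : Prop :=
  ∃ (N : Bundled.{w} L.Structure) (emb : M ↪ₑ[L] N) (eb : Fin e → N),
    ∀ (f : A ↪[L] M) (i : Fin k),
      χ f = i ↔ (φ i).Realize (Sum.elim eb fun a => emb (f a))

/-- `χ` is an externally definable `k`-colouring of the copies of `A` in `M`. -/
def ExtDefinable (L : FirstOrder.Language.{u, v}) (M : Type w) [L.Structure M]
    (A : Type w) [L.Structure A] {k : ℕ} (χ : (A ↪[L] M) → Fin k) : Prop :=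
  ∃ (e : ℕ) (φ : Fin k → L.Formula (Fin e ⊕ A)), ExtDefinableBy L M A φ χ

/-- The copy of `B` in `M` given by the embedding `g` is `χ`-monochromatic: `χ` is constant
on the copies of `A` lying inside the image of `g`. -/
def MonochromaticOn (L : FirstOrder.Language.{u, v}) (M : Type w) [L.Structure M]
    (A B : Type w) [L.Structure A] [L.Structure B]
    {k : ℕ} (χ : (A ↪[L] M) → Fin k) (g : B ↪[L] M) : Prop :=
  ∀ f₁ f₂ : A ↪[L] M, Set.range (f₁ : A → M) ⊆ Set.range (g : B → M) →
    Set.range (f₂ : A → M) ⊆ Set.range (g : B → M) → χ f₁ = χ f₂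

/-- `M` has the externally definable `ā`-Ramsey property, where `ā` enumerates `A`:
for every `k ≥ 1`, every `B` in the age of `M` and every externally definable `k`-colouring `χ`
of the copies of `A` in `M`, there is a `χ`-monochromatic copy of `B` in `M`. -/
def ExtDefARamsey (L : FirstOrder.Language.{u, v}) (M : Type w) [L.Structure M]
    (A : Type w) [L.Structure A] : Prop :=
  ∀ (k : ℕ), 1 ≤ k → ∀ (B : Type w) [L.Structure B], Finite B → Nonempty (B ↪[L] M) →
    ∀ χ : (A ↪[L] M) → Fin k, ExtDefinable L M A χ →
      ∃ g : B ↪[L] M, MonochromaticOn L M A B χ g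

/-- `M` has the externally definable Ramsey property. -/
def ExtDefRamsey (L : FirstOrder.Language.{u, v}) (M : Type w) [L.Structure M] : Prop :=
  ∀ (A : Type w) [L.Structure A], Finite A → Nonempty (A ↪[L] M) → ExtDefARamsey L M A

/-- `M` has the point-Ramsey property: for every one-element `A` in the age of `M`, every
`k ≥ 1`, every `k`-colouring of the copies of `A` in `M` (not necessarily definable) and every
`B` in the age of `M`, there is a monochromatic copy of `B` in `M`. -/
def PointRamsey (L : FirstOrder.Language.{u, v}) (M : Type w) [L.Structure M] : Prop :=
  ∀ (A : Type w) [L.Structure A], Finite A → Nat.card A = 1 → Nonempty (A ↪[L] M) →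
    ∀ (k : ℕ), 1 ≤ k → ∀ (B : Type w) [L.Structure B], Finite B → Nonempty (B ↪[L] M) →
      ∀ χ : (A ↪[L] M) → Fin k, ∃ g : B ↪[L] M, MonochromaticOn L M A B χ g



variable {L : FirstOrder.Language.{u, v}}

section Helpers

theorem fin2eta {α : Type*} (x : Fin 2 → α) : x = ![x 0, x 1] := by
  funext i
  fin_cases i <;> simp

theorem comp_vec2 {α β : Type*} (f : α → β) (a b : α) : f ∘ ![a, b] = ![f a, f b] := by
  funext i
  fin_cases i <;> simp

theorem term_eq_var [L.IsRelational] {δ : Type*} (t : L.Term δ) : ∃ i, t = Term.var i := by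
  cases t with
  | var i => exact ⟨i, rfl⟩
  | func f ts => exact isEmptyElim f

/-- Finite conjunction of formulas. -/
def listInf {α : Type*} (l : List (L.Formula α)) : L.Formula α :=
  l.foldr (· ⊓ ·) ⊤

theorem realize_listInf {α : Type*} {S : Type*} [L.Structure S] {l : List (L.Formula α)}
    {v : α → S} : (listInf l).Realize v ↔ ∀ φ ∈ l, φ.Realize v := by
  induction l with
  | nil => simp [listInf]
  | cons φ l ih =>
    simp only [listInf, List.foldr_cons, Formula.realize_inf, List.mem_cons]
    rw [show (List.foldr (· ⊓ ·) ⊤ l : L.Formula α) = listInf l from rfl, ih]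
    constructor
    · rintro ⟨h1, h2⟩ ψ (rfl | hm)
      exacts [h1, h2 _ hm]
    · intro h
      exact ⟨h _ (Or.inl rfl), fun ψ hm => h _ (Or.inr hm)⟩

/-- Classical truth value of a proposition. -/
noncomputable def pb (p : Prop) : Bool := @decide p (Classical.propDecidable p)

theorem pb_congr {p q : Prop} (h : pb p = pb q) : p ↔ q := by
  have h1 : pb p = true ↔ p := @decide_eq_true_iff p (Classical.propDecidable p)
  have h2 : pb q = true ↔ q := @decide_eq_true_iff q (Classical.propDecidable q)
  rw [← h1, ← h2, h]

end Helpers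

section PQF

variable (L) in
/-- Two tuples have the same quantifier-free configuration. -/
def PQF {γ : Type*} (S : Type*) [L.Structure S] (v₁ v₂ : γ → S) : Prop :=
  (∀ i j, v₁ i = v₁ j ↔ v₂ i = v₂ j) ∧
    ∀ (R : L.Relations 2) (i j : γ), RelMap R ![v₁ i, v₁ j] ↔ RelMap R ![v₂ i, v₂ j]

namespace PQF

variable {γ δ : Type*} {S : Type*} [L.Structure S]

theorem symm {v₁ v₂ : γ → S} (h : PQF L S v₁ v₂) : PQF L S v₂ v₁ :=
  ⟨fun i j => (h.1 i j).symm, fun R i j => (h.2 R i j).symm⟩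

theorem congr {v₁ v₂ w₁ w₂ : γ → S} (h : PQF L S v₁ v₂)
    (h1 : ∀ i, w₁ i = v₁ i) (h2 : ∀ i, w₂ i = v₂ i) : PQF L S w₁ w₂ := by
  constructor
  · intro i j
    rw [h1 i, h1 j, h2 i, h2 j]
    exact h.1 i j
  · intro R i j
    rw [h1 i, h1 j, h2 i, h2 j]
    exact h.2 R i j

theorem comp {v₁ v₂ : γ → S} (h : PQF L S v₁ v₂) (f : δ → γ) :
    PQF L S (v₁ ∘ f) (v₂ ∘ f) :=
  ⟨fun i j => h.1 (f i) (f j), fun R i j => h.2 R (f i) (f j)⟩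

theorem relMap (hbin : ∀ n : ℕ, n ≠ 2 → IsEmpty (L.Relations n))
    {v₁ v₂ : γ → S} (h : PQF L S v₁ v₂) {l : ℕ} (R : L.Relations l) (x : Fin l → γ) :
    RelMap R (v₁ ∘ x) ↔ RelMap R (v₂ ∘ x) := by
  rcases eq_or_ne l 2 with rfl | hl
  · rw [fin2eta (v₁ ∘ x), fin2eta (v₂ ∘ x)]
    exact h.2 R (x 0) (x 1)
  · exact ((hbin l hl).false R).elim

end PQF

variable (L) in
/-- The one-point qf-extension property. -/
def EP (S : Type w) [L.Structure S] : Prop :=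
  ∀ (γ : Type w) (_ : Finite γ) (v₁ v₂ : γ → S), PQF L S v₁ v₂ → ∀ a : S, ∃ a' : S,
    PQF L S (fun o : Option γ => o.elim a v₁) (fun o : Option γ => o.elim a' v₂)

/-- Quantifier-free configuration determines satisfaction, in any structure with the
one-point extension property. -/
theorem realize_iff_of_pqf [L.IsRelational] (hbin : ∀ n : ℕ, n ≠ 2 → IsEmpty (L.Relations n))
    {S : Type w} [L.Structure S] (hEP : EP L S) {β : Type w} [Finite β] :
    ∀ {n : ℕ} (φ : L.BoundedFormula β n) (v₁ v₂ : β → S) (x₁ x₂ : Fin n → S),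
      PQF L S (Sum.elim v₁ x₁) (Sum.elim v₂ x₂) → (φ.Realize v₁ x₁ ↔ φ.Realize v₂ x₂) := by
  intro n φ
  induction φ with
  | falsum => exact fun _ _ _ _ _ => Iff.rfl
  | equal t₁ t₂ =>
    intro v₁ v₂ x₁ x₂ h
    obtain ⟨i, rfl⟩ := term_eq_var t₁
    obtain ⟨j, rfl⟩ := term_eq_var t₂
    exact h.1 i j
  | rel R ts =>
    intro v₁ v₂ x₁ x₂ h
    choose p hp using fun i => term_eq_var (ts i)
    have e₁ : (fun i => (ts i).realize (Sum.elim v₁ x₁)) = (Sum.elim v₁ x₁) ∘ p := by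
      funext i; rw [hp i]; rfl
    have e₂ : (fun i => (ts i).realize (Sum.elim v₂ x₂)) = (Sum.elim v₂ x₂) ∘ p := by
      funext i; rw [hp i]; rfl
    show RelMap R (fun i => (ts i).realize (Sum.elim v₁ x₁)) ↔
      RelMap R (fun i => (ts i).realize (Sum.elim v₂ x₂))
    rw [e₁, e₂]
    exact h.relMap hbin R p
  | imp φ ψ ihφ ihψ =>
    intro v₁ v₂ x₁ x₂ h
    rw [BoundedFormula.realize_imp, BoundedFormula.realize_imp]
    exact imp_congr (ihφ v₁ v₂ x₁ x₂ h) (ihψ v₁ v₂ x₁ x₂ h)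
  | @all n φ ih =>
    intro v₁ v₂ x₁ x₂ h
    rw [BoundedFormula.realize_all, BoundedFormula.realize_all]
    have key : ∀ (w₁ w₂ : β → S) (y₁ y₂ : Fin n → S),
        PQF L S (Sum.elim w₁ y₁) (Sum.elim w₂ y₂) →
        (∀ a, φ.Realize w₁ (Fin.snoc y₁ a)) → ∀ a₂, φ.Realize w₂ (Fin.snoc y₂ a₂) := by
      intro w₁ w₂ y₁ y₂ hw hall a₂
      obtain ⟨a₁, ha⟩ := hEP (β ⊕ Fin n) inferInstance _ _ hw.symm a₂
      have ha' := ha.symm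
      set emap : β ⊕ Fin (n + 1) → Option (β ⊕ Fin n) :=
        Sum.elim (fun b => some (Sum.inl b))
          (Fin.lastCases none (fun i => some (Sum.inr i))) with hemap
      have hmap : ∀ (w : β → S) (y : Fin n → S) (c : S),
          (fun o : Option (β ⊕ Fin n) => o.elim c (Sum.elim w y)) ∘ emap =
          Sum.elim w (Fin.snoc y c) := by
        intro w y c
        funext z
        cases z with
        | inl b => rfl
        | inr i =>
          refine Fin.lastCases ?_ ?_ i
          · simp [hemap, Fin.snoc_last]
          · intro j; simp [hemap, Fin.snoc_castSucc]
      have hpqf : PQF L S (Sum.elim w₁ (Fin.snoc y₁ a₁)) (Sum.elim w₂ (Fin.snoc y₂ a₂)) := by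
        have h2 := ha'.comp emap
        rwa [hmap, hmap] at h2
      exact (ih w₁ w₂ _ _ hpqf).mp (hall a₁)
    constructor
    · exact key v₁ v₂ x₁ x₂ h
    · exact key v₂ v₁ x₂ x₁ h.symm

end PQF

section Sentences

variable [L.IsRelational]

variable (L) in
/-- Formula expressing that the tuples `p` and `q` (of variables) have the same
quantifier-free configuration. -/
noncomputable def sameCfg [Fintype (L.Relations 2)] {ι : Type} [Fintype ι] {δ : Type}
    (p q : ι → δ) : L.Formula δ :=
  listInf <| (Finset.univ : Finset (ι × ι)).toList.map fun ij =>
    (((Term.var (p ij.1)).equal (Term.var (p ij.2))).iff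
        ((Term.var (q ij.1)).equal (Term.var (q ij.2)))) ⊓
      listInf ((Finset.univ : Finset (L.Relations 2)).toList.map fun R =>
        (R.formula₂ (Term.var (p ij.1)) (Term.var (p ij.2))).iff
          (R.formula₂ (Term.var (q ij.1)) (Term.var (q ij.2))))

theorem realize_sameCfg [Fintype (L.Relations 2)] {ι : Type} [Fintype ι] {δ : Type}
    {p q : ι → δ} {S : Type*} [L.Structure S] {w : δ → S} :
    (sameCfg L p q).Realize w ↔ PQF L S (w ∘ p) (w ∘ q) := by
  rw [sameCfg, realize_listInf]
  constructor
  · intro h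
    constructor
    · intro i j
      have := h _ (List.mem_map.2 ⟨(i, j), Finset.mem_toList.2 (Finset.mem_univ _), rfl⟩)
      rw [Formula.realize_inf, Formula.realize_iff, Formula.realize_equal,
        Formula.realize_equal] at this
      exact this.1
    · intro R i j
      have := h _ (List.mem_map.2 ⟨(i, j), Finset.mem_toList.2 (Finset.mem_univ _), rfl⟩)
      rw [Formula.realize_inf] at this
      have := realize_listInf.1 this.2 _
        (List.mem_map.2 ⟨R, Finset.mem_toList.2 (Finset.mem_univ _), rfl⟩)
      rw [Formula.realize_iff, Formula.realize_rel₂, Formula.realize_rel₂] at this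
      exact this
  · intro h φ hφ
    obtain ⟨⟨i, j⟩, -, rfl⟩ := List.mem_map.1 hφ
    rw [Formula.realize_inf, Formula.realize_iff, Formula.realize_equal, Formula.realize_equal]
    refine ⟨h.1 i j, realize_listInf.2 ?_⟩
    intro ψ hψ
    obtain ⟨R, -, rfl⟩ := List.mem_map.1 hψ
    rw [Formula.realize_iff, Formula.realize_rel₂, Formula.realize_rel₂]
    exact h.2 R i j

variable (L) in
/-- A sentence expressing the one-point extension property for `n`-tuples. -/
noncomputable def epSentence [Fintype (L.Relations 2)] (n : ℕ) : L.Sentence :=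
  let hyp : L.Formula ((Fin n ⊕ Fin n) ⊕ Unit) :=
    sameCfg L (fun i => Sum.inl (Sum.inl i)) (fun i => Sum.inl (Sum.inr i))
  let ext1 : Option (Fin n) → ((Fin n ⊕ Fin n) ⊕ Unit) ⊕ Unit :=
    fun o => o.elim (Sum.inl (Sum.inr ())) fun i => Sum.inl (Sum.inl (Sum.inl i))
  let ext2 : Option (Fin n) → ((Fin n ⊕ Fin n) ⊕ Unit) ⊕ Unit :=
    fun o => o.elim (Sum.inr ()) fun i => Sum.inl (Sum.inl (Sum.inr i))
  let core : L.Formula (((Fin n ⊕ Fin n) ⊕ Unit) ⊕ Unit) := sameCfg L ext1 ext2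
  Formula.iAlls ((Fin n ⊕ Fin n) ⊕ Unit)
    ((hyp.imp (Formula.iExs Unit core)).relabel (Sum.inr : ((Fin n ⊕ Fin n) ⊕ Unit) → Empty ⊕ _))

theorem realize_epSentence_iff [Fintype (L.Relations 2)] {S : Type*} [L.Structure S] {n : ℕ} :
    S ⊨ epSentence L n ↔ ∀ (v₁ v₂ : Fin n → S) (a : S), PQF L S v₁ v₂ →
      ∃ a' : S, PQF L S (fun o : Option (Fin n) => o.elim a v₁)
        (fun o : Option (Fin n) => o.elim a' v₂) := by
  simp only [epSentence]
  rw [Sentence.Realize, Formula.realize_iAlls]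
  simp only [Formula.realize_relabel, Sum.elim_comp_inr]
  constructor
  · intro h v₁ v₂ a hpqf
    have hx := h (Sum.elim (Sum.elim v₁ v₂) (fun _ => a))
    rw [Formula.realize_imp] at hx
    have hx2 := hx (by rw [realize_sameCfg]; exact hpqf)
    rw [Formula.realize_iExs] at hx2
    obtain ⟨ys, hcore⟩ := hx2
    rw [realize_sameCfg] at hcore
    exact ⟨ys (), hcore.congr (fun o => by cases o <;> rfl) (fun o => by cases o <;> rfl)⟩
  · intro h xs
    rw [Formula.realize_imp]
    intro hyp
    rw [realize_sameCfg] at hyp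
    obtain ⟨a', hpq⟩ := h (fun i => xs (Sum.inl (Sum.inl i))) (fun i => xs (Sum.inl (Sum.inr i)))
      (xs (Sum.inr ())) hyp
    rw [Formula.realize_iExs]
    refine ⟨fun _ => a', ?_⟩
    rw [realize_sameCfg]
    exact hpq.congr (fun o => by cases o <;> rfl) (fun o => by cases o <;> rfl)


theorem models_epSentence_of_ultrahomogeneous [Fintype (L.Relations 2)]
    (hbin : ∀ n : ℕ, n ≠ 2 → IsEmpty (L.Relations n))
    {M : Type w} [L.Structure M] (hM : L.IsUltrahomogeneous M) (n : ℕ) :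
    M ⊨ epSentence L n := by
  rw [realize_epSentence_iff]
  intro v₁ v₂ a hpqf
  -- the substructure generated by the range of `v₁`
  let T : L.Substructure M := { carrier := Set.range v₁, fun_mem := fun {m} f => isEmptyElim f }
  have hTmem : ∀ i, v₁ i ∈ T := fun i => ⟨i, rfl⟩
  have hTFG : T.FG := by
    refine ⟨(Set.finite_range v₁).toFinset, le_antisymm ((Substructure.closure_le).2 ?_) ?_⟩
    · intro x hx
      rw [Set.Finite.coe_toFinset] at hx
      exact hx
    · intro x hx
      exact Substructure.subset_closure (by rwa [Set.Finite.coe_toFinset])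
  -- the partial map sending `v₁` to `v₂`, as an embedding of `T` into `M`
  have hsel : ∀ s : T, ∃ i, v₁ i = (s : M) := fun s => s.2
  choose sel hsel' using hsel
  let F : T ↪[L] M :=
    { toFun := fun s => v₂ (sel s)
      inj' := by
        intro s t hst
        have := (hpqf.1 (sel s) (sel t)).2 hst
        rw [hsel' s, hsel' t] at this
        exact Subtype.ext this
      map_fun' := fun {m} f => isEmptyElim f
      map_rel' := by
        intro m r x
        rcases eq_or_ne m 2 with rfl | hm
        · have hx : ∀ (u : Fin 2 → M), RelMap r u = RelMap r ![u 0, u 1] := by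
            intro u; rw [← fin2eta u]
          have hcoe : RelMap r x ↔ RelMap r ![(x 0 : M), (x 1 : M)] := by
            rw [← fin2eta (fun i => (x i : M))]
            rfl
          rw [hx, hcoe]
          have h2 := hpqf.2 r (sel (x 0)) (sel (x 1))
          rw [hsel' (x 0), hsel' (x 1)] at h2
          exact h2.symm
        · exact ((hbin m hm).false r).elim }
  obtain ⟨g, hg⟩ := hM T hTFG F
  have hgv : ∀ i, v₂ i = g (v₁ i) := by
    intro i
    have h1 : F ⟨v₁ i, hTmem i⟩ = g (v₁ i) := by
      rw [hg]; rfl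
    have h2 : F ⟨v₁ i, hTmem i⟩ = v₂ i := by
      show v₂ (sel ⟨v₁ i, hTmem i⟩) = v₂ i
      exact (hpqf.1 (sel ⟨v₁ i, hTmem i⟩) i).1 (hsel' ⟨v₁ i, hTmem i⟩)
    rw [← h1, h2]
  refine ⟨g a, ?_⟩
  have hge : ∀ o : Option (Fin n), (o.elim (g a) v₂ : M) = g (o.elim a v₁) := by
    intro o
    cases o with
    | none => rfl
    | some i => exact hgv i
  constructor
  · intro i j
    show Option.elim i a v₁ = Option.elim j a v₁ ↔
      Option.elim i (g a) v₂ = Option.elim j (g a) v₂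
    rw [show Option.elim i (g a) v₂ = (Option.elim i (g a) v₂ : M) from rfl]
    rw [hge i, hge j]
    exact (g.toEquiv.injective.eq_iff).symm
  · intro R i j
    show RelMap R ![Option.elim i a v₁, Option.elim j a v₁] ↔
      RelMap R ![Option.elim i (g a) v₂, Option.elim j (g a) v₂]
    rw [hge i, hge j]
    have := g.toEmbedding.map_rel' R ![(Option.elim i a v₁ : M), (Option.elim j a v₁ : M)]
    rw [comp_vec2] at this
    exact this.symm

/-- The one-point extension property holds in any elementary extension of an
ultrahomogeneous structure. -/
theorem ep_of_elementary [Fintype (L.Relations 2)]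
    (hbin : ∀ n : ℕ, n ≠ 2 → IsEmpty (L.Relations n))
    {M : Type w} [L.Structure M] (hM : L.IsUltrahomogeneous M)
    {S : Type w} [L.Structure S] (emb : M ↪ₑ[L] S) : EP L S := by
  intro γ hγ v₁ v₂ hpqf a
  have hS : S ⊨ epSentence L (Nat.card γ) :=
    (emb.map_sentence _).1 (models_epSentence_of_ultrahomogeneous hbin hM _)
  rw [realize_epSentence_iff] at hS
  haveI : Finite γ := hγ
  let e : γ ≃ Fin (Nat.card γ) := Finite.equivFin γ
  obtain ⟨a', ha'⟩ := hS (v₁ ∘ e.symm) (v₂ ∘ e.symm) a (hpqf.comp e.symm)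
  refine ⟨a', ?_⟩
  have := ha'.comp (Option.map e)
  exact this.congr (fun o => by cases o <;> simp [Option.map]) 
    (fun o => by cases o <;> simp [Option.map])

end Sentences

section Colouring

/-- From an externally definable colouring we extract a point colouring of `M` with finitely
many colours which determines the colouring on embeddings of `A`. -/
theorem exists_point_colouring [L.IsRelational]
    (hbin : ∀ n : ℕ, n ≠ 2 → IsEmpty (L.Relations n)) (hfin : Finite (L.Relations 2))
    {M A : Type w} [L.Structure M] [L.Structure A] [Finite A]
    (hM : L.IsUltrahomogeneous M) {k e : ℕ} {φ : Fin k → L.Formula (Fin e ⊕ A)}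
    {χ : (A ↪[L] M) → Fin k} (h : ExtDefinableBy L M A φ χ) :
    ∃ (K : ℕ) (c : M → Fin K), 1 ≤ K ∧
      ∀ f₁ f₂ : A ↪[L] M, (∀ a, c (f₁ a) = c (f₂ a)) → χ f₁ = χ f₂ := by
  classical
  obtain ⟨N, emb, eb, hχ⟩ := h
  haveI := hfin
  haveI : Fintype (L.Relations 2) := Fintype.ofFinite _
  let T := (Fin e → Bool × (L.Relations 2 → Bool × Bool)) × (L.Relations 2 → Bool)
  haveI : Finite T := by infer_instance
  haveI : Nonempty T := ⟨⟨fun _ => (true, fun _ => (true, true)), fun _ => true⟩⟩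
  let eT : T ≃ Fin (Nat.card T) := Finite.equivFin T
  let craw : M → T := fun x =>
    (fun l => (pb (eb l = emb x),
        fun R => (pb (RelMap R ![eb l, emb x]), pb (RelMap R ![emb x, eb l]))),
      fun R => pb (RelMap R ![emb x, emb x]))
  refine ⟨Nat.card T, fun x => eT (craw x), Nat.card_pos, ?_⟩
  intro f₁ f₂ hc
  have hcr : ∀ a, craw (f₁ a) = craw (f₂ a) := fun a => eT.injective (hc a)
  set u₁ : Fin e ⊕ A → N := Sum.elim eb (fun a => emb (f₁ a)) with hu₁
  set u₂ : Fin e ⊕ A → N := Sum.elim eb (fun a => emb (f₂ a)) with hu₂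
  have pqf : PQF L N u₁ u₂ := by
    constructor
    · rintro (l | a) (l' | a')
      · exact Iff.rfl
      · have h1 := congrArg (fun t : T => (t.1 l).1) (hcr a')
        exact pb_congr h1
      · have h1 := congrArg (fun t : T => (t.1 l').1) (hcr a)
        rw [show (u₁ (Sum.inr a) = u₁ (Sum.inl l')) ↔ (u₁ (Sum.inl l') = u₁ (Sum.inr a))
          from eq_comm, show (u₂ (Sum.inr a) = u₂ (Sum.inl l')) ↔
            (u₂ (Sum.inl l') = u₂ (Sum.inr a)) from eq_comm]
        exact pb_congr h1
      · show emb (f₁ a) = emb (f₁ a') ↔ emb (f₂ a) = emb (f₂ a')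
        rw [emb.injective.eq_iff, emb.injective.eq_iff, f₁.injective.eq_iff,
          f₂.injective.eq_iff]
    · rintro R (l | a) (l' | a')
      · exact Iff.rfl
      · exact pb_congr (congrArg (fun t : T => ((t.1 l).2 R).1) (hcr a'))
      · exact pb_congr (congrArg (fun t : T => ((t.1 l').2 R).2) (hcr a))
      · show RelMap R ![emb (f₁ a), emb (f₁ a')] ↔ RelMap R ![emb (f₂ a), emb (f₂ a')]
        have e1 := emb.toEmbedding.map_rel' R ![f₁ a, f₁ a']
        have e2 := f₁.map_rel' R ![a, a']
        have e3 := emb.toEmbedding.map_rel' R ![f₂ a, f₂ a']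
        have e4 := f₂.map_rel' R ![a, a']
        rw [comp_vec2] at e1 e2 e3 e4
        exact (e1.trans (e2.trans e4.symm)).trans e3.symm
  have hEP : EP L N := ep_of_elementary hbin hM emb
  have pqf0 : PQF L N (Sum.elim u₁ (default : Fin 0 → N)) (Sum.elim u₂ default) := by
    refine (pqf.comp (Sum.elim id Fin.elim0)).congr ?_ ?_ <;>
      rintro (z | i) <;> first | rfl | exact i.elim0
  have hiff := realize_iff_of_pqf hbin hEP (φ (χ f₁)) u₁ u₂ default default pqf0
  have h1 : (φ (χ f₁)).Realize u₁ := (hχ f₁ (χ f₁)).1 rfl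
  exact ((hχ f₂ (χ f₁)).2 (hiff.1 h1)).symm

end Colouring

section Compactness

/-- Compactness: if every colouring admits a monochromatic copy of `B`, then there is a single
finite subset of `M` in which a monochromatic copy can always be found. -/
theorem finitary_ramsey {M A B : Type w} [L.Structure M] [L.Structure A] [L.Structure B]
    [Finite A] [Finite B] {k : ℕ}
    (hRam : ∀ χ : (A ↪[L] M) → Fin k, ∃ g : B ↪[L] M, MonochromaticOn L M A B χ g) :
    ∃ S : Finset M, ∀ χ : (A ↪[L] M) → Fin k,
      ∃ g : B ↪[L] M, Set.range (g : B → M) ⊆ ↑S ∧ MonochromaticOn L M A B χ g := by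
  classical
  by_contra hcon
  push_neg at hcon
  choose bad hbad using hcon
  let U : Ultrafilter (Finset M) := Ultrafilter.of Filter.atTop
  have hU : (U : Filter (Finset M)) ≤ Filter.atTop := Ultrafilter.of_le _
  have hsel : ∀ f : A ↪[L] M, ∃ v : Fin k, {S | bad S f = v} ∈ U := by
    intro f
    by_contra hno
    push_neg at hno
    have hc : ∀ v : Fin k, {S : Finset M | bad S f = v}ᶜ ∈ U := fun v =>
      (Ultrafilter.compl_mem_iff_notMem).2 (hno v)
    have hint : (⋂ v : Fin k, {S : Finset M | bad S f = v}ᶜ) ∈ U :=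
      (Filter.iInter_mem).2 hc
    obtain ⟨S, hS⟩ := Ultrafilter.nonempty_of_mem hint
    simp only [Set.mem_iInter, Set.mem_compl_iff, Set.mem_setOf_eq] at hS
    exact hS (bad S f) rfl
  choose χ hχU using hsel
  obtain ⟨g, hg⟩ := hRam χ
  haveI hrg : Finite ↥(Set.range (g : B → M)) := (Set.finite_range _).to_subtype
  haveI hF : Finite {f : A ↪[L] M // Set.range (f : A → M) ⊆ Set.range (g : B → M)} := by
    refine Finite.of_injective (fun f => (fun a =>
      (⟨f.1 a, f.2 (Set.mem_range_self a)⟩ : ↥(Set.range (g : B → M)))) : _ → (A → _)) ?_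
    intro f f' hff
    refine Subtype.ext (DFunLike.ext _ _ fun a => ?_)
    exact congrArg Subtype.val (congrFun hff a)
  set S₀ : Finset M := (Set.finite_range (g : B → M)).toFinset with hS₀
  have hT : ({S : Finset M | S₀ ≤ S} ∩
      ⋂ f : {f : A ↪[L] M // Set.range (f : A → M) ⊆ Set.range (g : B → M)},
        {S | bad S f.1 = χ f.1}) ∈ U := by
    refine Filter.inter_mem (hU (Filter.mem_atTop S₀)) ((Filter.iInter_mem).2 ?_)
    intro f
    exact hχU f.1
  obtain ⟨S, hS1, hS2⟩ := Ultrafilter.nonempty_of_mem hT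
  simp only [Set.mem_iInter, Set.mem_setOf_eq] at hS1 hS2
  refine hbad S g ?_ ?_
  · intro x hx
    have hx0 : x ∈ (S₀ : Set M) := by
      rw [hS₀, Set.Finite.coe_toFinset]
      exact hx
    exact Finset.coe_subset.2 hS1 hx0
  · intro f₁ f₂ h₁ h₂
    have e1 := hS2 ⟨f₁, h₁⟩
    have e2 := hS2 ⟨f₂, h₂⟩
    rw [e1, e2]
    exact hg f₁ f₂ h₁ h₂

end Compactness

section PointStructures

variable (L) in
/-- The one-point structure corresponding to an element `b` of `B`. -/
def PtS {B : Type w} [L.Structure B] (b : B) : Type w := PUnit.{w + 1}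

instance {B : Type w} [L.Structure B] (b : B) : Unique (PtS L b) :=
  inferInstanceAs (Unique PUnit)

instance [L.IsRelational] {B : Type w} [L.Structure B] (b : B) : L.Structure (PtS L b) where
  funMap := fun {_} f _ => isEmptyElim f
  RelMap := fun {n} R _ => RelMap R fun _ : Fin n => b

variable [L.IsRelational]

variable (L) in
/-- An embedding of the one-point structure at a point realizing the same relations. -/
def mkPtEmb {B M : Type w} [L.Structure B] [L.Structure M] {b : B} (z : M)
    (hz : ∀ (n : ℕ) (R : L.Relations n),
      RelMap R (fun _ : Fin n => z) ↔ RelMap R (fun _ : Fin n => b)) :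
    PtS L b ↪[L] M where
  toFun := fun _ => z
  inj' := fun x y _ => Subsingleton.elim x y
  map_fun' := fun {_} f _ => isEmptyElim f
  map_rel' := fun {n} R _ => hz n R

theorem ptEmb_spec {B M : Type w} [L.Structure B] [L.Structure M] {b : B}
    (f : PtS L b ↪[L] M) (n : ℕ) (R : L.Relations n) :
    RelMap R (fun _ : Fin n => f default) ↔ RelMap R (fun _ : Fin n => b) :=
  f.map_rel' R fun _ => default

variable (L) in
/-- Any finite subset of a relational structure is a substructure. -/
def finsetSub {M : Type w} [L.Structure M] (S : Finset M) : L.Substructure M where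
  carrier := ↑S
  fun_mem := fun {_} f => isEmptyElim f

variable (L) in
theorem finite_finsetSub {M : Type w} [L.Structure M] (S : Finset M) :
    Finite ↥(finsetSub L S) :=
  Finite.of_injective (fun x => (⟨x.1, x.2⟩ : {y : M // y ∈ (S : Set M)}))
    fun x y h => Subtype.ext (congrArg Subtype.val h)

/-- The main induction: a copy of `C` on which the point colouring is constant on the
realizations of the one-point type of each element in the list `l`. -/
theorem listB {M B : Type w} [L.Structure M] [L.Structure B]
    (g₀ : B ↪[L] M) {K : ℕ} (hK : 1 ≤ K) (hpt : PointRamsey L M)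
    (C : Type w) [L.Structure C] [Finite C] (hCne : Nonempty (C ↪[L] M)) :
    ∀ l : List B, ∃ S : Finset M, ∀ c : M → Fin K, ∃ g : C ↪[L] M,
      Set.range (g : C → M) ⊆ ↑S ∧
      ∀ b ∈ l, ∀ f₁ f₂ : PtS L b ↪[L] M,
        Set.range (f₁ : _ → M) ⊆ Set.range (g : C → M) →
        Set.range (f₂ : _ → M) ⊆ Set.range (g : C → M) →
        c (f₁ default) = c (f₂ default) := by
  intro l
  induction l with
  | nil =>
    obtain ⟨g⟩ := hCne
    refine ⟨(Set.finite_range (g : C → M)).toFinset, fun c => ⟨g, ?_, ?_⟩⟩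
    · rw [Set.Finite.coe_toFinset]
    · intro b hb
      simp at hb
  | cons b l ih =>
    obtain ⟨S', hS'⟩ := ih
    haveI : Finite ↥(finsetSub L S') := finite_finsetSub L S'
    have hptb : Nonempty (PtS L b ↪[L] M) :=
      ⟨mkPtEmb L (g₀ b) fun n R => g₀.map_rel' R fun _ => b⟩
    have hpoint : ∀ χ : (PtS L b ↪[L] M) → Fin K, ∃ h : ↥(finsetSub L S') ↪[L] M,
        MonochromaticOn L M (PtS L b) ↥(finsetSub L S') χ h :=
      fun χ => hpt (PtS L b) inferInstance Nat.card_unique hptb K hK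
        ↥(finsetSub L S') inferInstance ⟨(finsetSub L S').subtype⟩ χ
    obtain ⟨S'', hS''⟩ := finitary_ramsey hpoint
    refine ⟨S'', fun c => ?_⟩
    obtain ⟨g₂, hg₂range, hg₂mono⟩ := hS'' fun f => c (f default)
    classical
    let c' : M → Fin K := fun x => if h : x ∈ finsetSub L S' then c (g₂ ⟨x, h⟩) else c x
    obtain ⟨g₁, hg₁range, hg₁l⟩ := hS' c'
    have hmem : ∀ x : C, g₁ x ∈ finsetSub L S' := fun x => hg₁range (Set.mem_range_self x)
    let gres : C ↪[L] ↥(finsetSub L S') := FirstOrder.Language.Embedding.codRestrict _ g₁ hmem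
    refine ⟨g₂.comp gres, ?_, ?_⟩
    · intro x hx
      obtain ⟨y, hy⟩ := hx
      exact hg₂range ⟨gres y, hy⟩
    · intro b' hb' f₁ f₂ h₁ h₂
      have hsub : Set.range ((g₂.comp gres : C ↪[L] M) : C → M) ⊆
          Set.range (g₂ : ↥(finsetSub L S') → M) := by
        rintro x ⟨y, hy⟩
        exact ⟨gres y, hy⟩
      rcases List.mem_cons.1 hb' with rfl | hb'
      · exact hg₂mono f₁ f₂ (h₁.trans hsub) (h₂.trans hsub)
      · -- pull the points back through `g₂`
        obtain ⟨x₁, hx₁⟩ := h₁ (Set.mem_range_self default)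
        obtain ⟨x₂, hx₂⟩ := h₂ (Set.mem_range_self default)
        have key : ∀ (f : PtS L b' ↪[L] M) (x : C),
            (g₂.comp gres) x = f default → c (f default) = c (f₂ default) →
            True := fun _ _ _ _ => trivial
        -- build the transported one-point embeddings
        have hz : ∀ (f : PtS L b' ↪[L] M) (x : C), (g₂.comp gres) x = f default →
            ∀ (n : ℕ) (R : L.Relations n),
              RelMap R (fun _ : Fin n => ((gres x : ↥(finsetSub L S')) : M)) ↔
              RelMap R (fun _ : Fin n => b') := by
          intro f x hx n R
          have e1 : RelMap R (fun _ : Fin n => ((gres x : ↥(finsetSub L S')) : M)) ↔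
              RelMap (M := ↥(finsetSub L S')) R (fun _ : Fin n => gres x) := Iff.rfl
          have e2 := g₂.map_rel' R (fun _ : Fin n => gres x)
          have e3 : (g₂.toFun ∘ fun _ : Fin n => gres x) = fun _ : Fin n => f default := by
            funext i
            exact hx
          rw [e3] at e2
          exact e1.trans (e2.symm.trans (ptEmb_spec f n R))
        let t₁ := mkPtEmb L ((gres x₁ : ↥(finsetSub L S')) : M) (hz f₁ x₁ hx₁)
        let t₂ := mkPtEmb L ((gres x₂ : ↥(finsetSub L S')) : M) (hz f₂ x₂ hx₂)
        have ht : c' (t₁ default) = c' (t₂ default) := by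
          refine hg₁l b' hb' t₁ t₂ ?_ ?_
          · rintro z ⟨w, rfl⟩
            exact ⟨x₁, rfl⟩
          · rintro z ⟨w, rfl⟩
            exact ⟨x₂, rfl⟩
        have hc' : ∀ (x : C) (f : PtS L b' ↪[L] M), (g₂.comp gres) x = f default →
            c' ((gres x : ↥(finsetSub L S')) : M) = c (f default) := by
          intro x f hx
          have hm : ((gres x : ↥(finsetSub L S')) : M) ∈ finsetSub L S' := (gres x).2
          rw [show c' ((gres x : ↥(finsetSub L S')) : M) = c (g₂ ⟨((gres x :
            ↥(finsetSub L S')) : M), hm⟩) from dif_pos hm]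
          rw [show (⟨((gres x : ↥(finsetSub L S')) : M), hm⟩ : ↥(finsetSub L S')) = gres x
            from Subtype.ext rfl]
          rw [show g₂ (gres x) = (g₂.comp gres) x from rfl, hx]
        have e1 := hc' x₁ f₁ hx₁
        have e2 := hc' x₂ f₂ hx₂
        rw [show t₁ default = ((gres x₁ : ↥(finsetSub L S')) : M) from rfl] at ht
        rw [show t₂ default = ((gres x₂ : ↥(finsetSub L S')) : M) from rfl] at ht
        rw [e1, e2] at ht
        exact ht

end PointStructures





/-- **Proposition 6.1.** -/
theorem extDefRamsey_of_pointRamsey_binary' (L : FirstOrder.Language.{u, v}) [L.IsRelational]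
    (hbin : ∀ n : ℕ, n ≠ 2 → IsEmpty (L.Relations n)) (hfin : Finite (L.Relations 2))
    (M : Type w) [L.Structure M]
    (hM : L.IsUltrahomogeneous M) (hpt : PointRamsey L M) :
    ExtDefRamsey L M := by
  intro A _ hAfin _hAne k _hk B _ hBfin hBne χ hχdef
  obtain ⟨e, φ, hdef⟩ := hχdef
  haveI := hAfin
  haveI := hBfin
  haveI : Fintype B := Fintype.ofFinite B
  obtain ⟨K, c, hK, hinv⟩ := exists_point_colouring hbin hfin hM hdef
  obtain ⟨g₀⟩ := hBne
  obtain ⟨S, hS⟩ := listB g₀ hK hpt B ⟨g₀⟩ (Finset.univ : Finset B).toList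
  obtain ⟨g, _hgrange, hgl⟩ := hS c
  refine ⟨g, ?_⟩
  intro f₁ f₂ h₁ h₂
  apply hinv
  intro a
  obtain ⟨b₁, hb₁⟩ := h₁ (Set.mem_range_self a)
  have hz₁ : ∀ (n : ℕ) (R : L.Relations n),
      RelMap R (fun _ : Fin n => f₁ a) ↔ RelMap R (fun _ : Fin n => b₁) := by
    intro n R
    have e1 := g.map_rel' R (fun _ : Fin n => b₁)
    have e2 : (g.toFun ∘ fun _ : Fin n => b₁) = fun _ : Fin n => f₁ a := by
      funext i
      exact hb₁
    rw [e2] at e1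
    exact e1
  have hz₂ : ∀ (n : ℕ) (R : L.Relations n),
      RelMap R (fun _ : Fin n => f₂ a) ↔ RelMap R (fun _ : Fin n => b₁) := by
    intro n R
    have e1 := f₂.map_rel' R (fun _ : Fin n => a)
    have e2 := f₁.map_rel' R (fun _ : Fin n => a)
    have e3 : (f₂.toFun ∘ fun _ : Fin n => a) = fun _ : Fin n => f₂ a := rfl
    have e4 : (f₁.toFun ∘ fun _ : Fin n => a) = fun _ : Fin n => f₁ a := rfl
    rw [e3] at e1
    rw [e4] at e2
    exact (e1.trans e2.symm).trans (hz₁ n R)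
  have ht := hgl b₁ (Finset.mem_toList.2 (Finset.mem_univ b₁))
    (mkPtEmb L (f₁ a) hz₁) (mkPtEmb L (f₂ a) hz₂) ?_ ?_
  · exact ht
  · rintro z ⟨w, rfl⟩
    exact h₁ (Set.mem_range_self a)
  · rintro z ⟨w, rfl⟩
    exact h₂ (Set.mem_range_self a)


/-- **Proposition 6.1.** A countably infinite ultrahomogeneous structure in a language with
finitely many relation symbols, all binary, which has the point-Ramsey property, has the
externally definable Ramsey property. -/
theorem extDefRamsey_of_pointRamsey_binary (L : FirstOrder.Language.{u, v}) [L.IsRelational]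
    (hbin : ∀ n : ℕ, n ≠ 2 → IsEmpty (L.Relations n)) (hfin : Finite (L.Relations 2))
    (M : Type w) [L.Structure M] [Countable M] [Infinite M]
    (hM : L.IsUltrahomogeneous M) (hpt : PointRamsey L M) :
    ExtDefRamsey L M := by
  exact extDefRamsey_of_pointRamsey_binary' L hbin hfin M hM hpt

end EDRP
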